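/- The space 𝓑̂ of barcodes modulo overall shift, equipped with the distance induced by the bottleneck distance, is a complete metric space: every Cauchy sequence in 𝓑̂ converges. -/

import Mathlib

open scoped ENNReal

/-- A bar `(a, b]`, where the second component `⊤ : EReal` encodes a
semi-infinite bar `(a, +∞)`. -/
abbrev Bar := ℝ × EReal

namespace Bar

/-- A bar is valid when it describes a non-empty interval. -/
def IsValid (I : Bar) : Prop := (I.1 : EReal) < I.2

/-- The length of a bar. -/
noncomputable def length (I : Bar) : EReal := I.2 - (I.1 : EReal)

/-- The interval `(a, b]` (or `(a, +∞)`) underlying a bar, as a subset of `ℝ`. -/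
def toSet (I : Bar) : Set ℝ := {x | I.1 < x ∧ (x : EReal) ≤ I.2}

/-- The `δ`-thickening `I^{-δ}` of a bar: `(a, b]` becomes `(a - δ, b + δ]`
and `(a, +∞)` becomes `(a - δ, +∞)`. -/
noncomputable def thicken (δ : ℝ) (I : Bar) : Bar := (I.1 - δ, I.2 + (δ : EReal))

/-- The shift of a bar by `c ∈ ℝ`. -/
noncomputable def shift (c : ℝ) (I : Bar) : Bar := (I.1 + c, I.2 + (c : EReal))

/-- A bar is semi-infinite when its right end point is `+∞`. -/
def IsInfinite (I : Bar) : Prop := I.2 = ⊤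

lemma length_shift (c : ℝ) (I : Bar) : (I.shift c).length = I.length := by
  obtain ⟨a, b⟩ := I
  induction b using EReal.rec with
  | bot => simp [shift, length]
  | top => show (⊤ : EReal) - ((a + c : ℝ) : EReal) = ⊤ - (a : EReal); rw [EReal.top_sub_coe, EReal.top_sub_coe]
  | coe b =>
      show ((b : EReal) + (c : EReal)) - ((a + c : ℝ) : EReal) = (b : EReal) - (a : EReal)
      norm_cast
      ring

lemma IsValid.shift {I : Bar} (h : I.IsValid) (c : ℝ) : (I.shift c).IsValid := by
  obtain ⟨a, b⟩ := I
  show ((a + c : ℝ) : EReal) < b + (c : EReal)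
  push_cast
  exact EReal.add_lt_add_right_coe h c

end Bar

/-- A barcode: a multiset of valid bars (encoded by an indexed family), such
that for every `ε > 0` only finitely many bars have length at least `ε`. -/
structure Barcode where
  ι : Type
  bar : ι → Bar
  valid : ∀ i, (bar i).IsValid
  finLong : ∀ ε : ℝ, 0 < ε → {i | (ε : EReal) ≤ (bar i).length}.Finite

namespace Barcode

/-- Equality of barcodes as multisets of bars: there is a bijection between the
index sets commuting with the bars. -/
def Equiv (B B' : Barcode) : Prop :=
  ∃ e : B.ι ≃ B'.ι, ∀ i, B'.bar (e i) = B.bar i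

/-- A `δ`-matching between two barcodes: one deletes, in both barcodes, some
bars of length at most `2δ`, and finds a bijection `φ` between the remaining
bars such that `φ(I) = J` implies `I ⊆ J^{-δ}` and `J ⊆ I^{-δ}`. -/
structure Matching (δ : ℝ) (B B' : Barcode) where
  del : Set B.ι
  del' : Set B'.ι
  del_short : ∀ i ∈ del, (B.bar i).length ≤ ((2 * δ : ℝ) : EReal)
  del'_short : ∀ j ∈ del', (B'.bar j).length ≤ ((2 * δ : ℝ) : EReal)
  φ : ↥(delᶜ) ≃ ↥(del'ᶜ)
  subset : ∀ i : ↥(delᶜ), (B.bar i).toSet ⊆ (Bar.thicken δ (B'.bar (φ i))).toSet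
  subset' : ∀ i : ↥(delᶜ), (B'.bar (φ i)).toSet ⊆ (Bar.thicken δ (B.bar i)).toSet

/-- The bottleneck distance between two barcodes (`⊤` if no matching exists). -/
noncomputable def dBottle (B B' : Barcode) : ℝ≥0∞ :=
  sInf (ENNReal.ofReal '' {δ : ℝ | 0 ≤ δ ∧ Nonempty (Matching δ B B')})

/-- The shift of a barcode by `c ∈ ℝ`, denoted `B[c]`. -/
noncomputable def shift (c : ℝ) (B : Barcode) : Barcode where
  ι := B.ι
  bar i := (B.bar i).shift c
  valid i := (B.valid i).shift c
  finLong ε hε := by simpa [Bar.length_shift] using B.finLong ε hε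

/-- `σ^∞(B)`: the number of semi-infinite bars of `B`. -/
noncomputable def sigmaInf (B : Barcode) : ℕ :=
  Nat.card {i : B.ι // (B.bar i).IsInfinite}

/-- The quotient pseudo-distance on the space `𝓑̂` of barcodes modulo overall
shift: `δ([B], [B']) = inf_c d_bottle(B, B'[c])`. -/
noncomputable def dHat (B B' : Barcode) : ℝ≥0∞ :=
  ⨅ c : ℝ, dBottle B (B'.shift c)

end Barcode

namespace BSC
open Bar

lemma ereal_add_add (x : EReal) (a b : ℝ) : x + (a:EReal) + (b:EReal) = x + ((a + b : ℝ):EReal) := by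
  induction x using EReal.rec with
  | bot => simp [EReal.bot_add]
  | top => simp [EReal.top_add_coe]
  | coe r => norm_cast; ring

lemma ereal_add_comm3 (x : EReal) (a b : ℝ) : x + (a:EReal) + (b:EReal) = x + (b:EReal) + (a:EReal) := by
  rw [ereal_add_add, ereal_add_add, add_comm a b]

/-- endpoint characterization of `I ⊆ thicken δ J`. -/
def EP (δ : ℝ) (I J : Bar) : Prop := J.1 - δ ≤ I.1 ∧ I.2 ≤ J.2 + (δ : EReal)

lemma subset_of_EP {δ : ℝ} {I J : Bar} (h : EP δ I J) :
    I.toSet ⊆ (Bar.thicken δ J).toSet := by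
  rintro x ⟨hx1, hx2⟩
  exact ⟨lt_of_le_of_lt h.1 hx1, le_trans hx2 h.2⟩

lemma EP_of_subset {δ : ℝ} {I J : Bar} (hI : I.IsValid)
    (h : I.toSet ⊆ (Bar.thicken δ J).toSet) : EP δ I J := by
  obtain ⟨a, b⟩ := I
  obtain ⟨a', b'⟩ := J
  have hab : (a : EReal) < b := hI
  constructor
  · -- left endpoint
    by_contra hcon
    push_neg at hcon
    obtain ⟨t, ht1, ht2⟩ : ∃ t : ℝ, a < t ∧ (t : EReal) ≤ b := by
      induction b using EReal.rec with
      | bot => exact absurd hab (by simp)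
      | top => exact ⟨a + 1, by linarith, le_top⟩
      | coe b => exact ⟨b, by exact_mod_cast hab, le_refl _⟩
    set x := min t ((a', b').1 - δ) with hx
    have hxmem : x ∈ toSet (a, b) := by
      constructor
      · exact lt_min ht1 (by simpa using hcon)
      · calc (x : EReal) ≤ (t : EReal) := by exact_mod_cast min_le_left _ _
          _ ≤ b := ht2
    have := (h hxmem).1
    simp only [thicken] at this
    exact absurd (min_le_right t ((a', b').1 - δ)) (not_le.2 this)
  · -- right endpoint
    show b ≤ b' + (δ : EReal)
    induction b using EReal.rec with
    | bot => exact absurd hab (by simp)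
    | top =>
      induction b' using EReal.rec with
      | top => simp [EReal.top_add_coe]
      | bot =>
        have hmem : (a + 1) ∈ toSet (a, (⊤:EReal)) := ⟨by linarith, le_top⟩
        have h2 := (h hmem).2
        simp only [thicken] at h2
        rw [EReal.bot_add] at h2
        exact absurd (le_bot_iff.1 h2) (EReal.coe_ne_bot _)
      | coe r =>
        have hmem : (max (a+1) (r + δ + 1)) ∈ toSet (a, (⊤:EReal)) :=
          ⟨lt_of_lt_of_le (by linarith) (le_max_left _ _), le_top⟩
        have h2 := (h hmem).2
        simp only [thicken] at h2
        rw [show ((r:EReal) + (δ:EReal)) = ((r + δ:ℝ):EReal) by norm_cast] at h2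
        have h2' : (max (a+1) (r + δ + 1)) ≤ r + δ := by exact_mod_cast h2
        have := le_max_right (a+1) (r + δ + 1)
        linarith
    | coe b =>
      have hmem : b ∈ toSet (a, (b:EReal)) := ⟨by exact_mod_cast hab, le_refl _⟩
      have h2 := (h hmem).2
      simpa only [thicken] using h2

lemma EP.trans {δ δ' : ℝ} {I J K : Bar} (h : EP δ I J) (h' : EP δ' J K) :
    EP (δ + δ') I K := by
  constructor
  · have := h.1; have := h'.1; show K.1 - (δ + δ') ≤ I.1; linarith
  · calc I.2 ≤ J.2 + (δ : EReal) := h.2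
      _ ≤ (K.2 + (δ' : EReal)) + (δ : EReal) := by gcongr; exact h'.2
      _ = K.2 + ((δ + δ' : ℝ) : EReal) := by rw [ereal_add_add, add_comm δ' δ]

lemma EP.length_le {δ : ℝ} {I J : Bar} (h : EP δ I J) (h' : EP δ J I) :
    I.length ≤ J.length + ((2 * δ : ℝ) : EReal) := by
  obtain ⟨a, b⟩ := I; obtain ⟨a', b'⟩ := J
  obtain ⟨h1, h2⟩ := h; obtain ⟨h1', h2'⟩ := h'
  simp only at h1 h2 h1' h2'
  show b - (a:EReal) ≤ b' - (a':EReal) + ((2*δ:ℝ):EReal)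
  induction b' using EReal.rec with
  | top => rw [EReal.top_sub_coe, EReal.top_add_coe]; exact le_top
  | bot =>
    have : b = ⊥ := le_bot_iff.1 (by simpa [EReal.bot_add] using h2)
    simp [this]
  | coe r' =>
    induction b using EReal.rec with
    | bot => simp
    | top =>
      exfalso
      rw [show ((r':EReal) + (δ:EReal)) = ((r' + δ:ℝ):EReal) by norm_cast] at h2
      exact (EReal.coe_lt_top (r' + δ)).not_ge h2
    | coe r =>
      rw [show ((r':EReal) + (δ:EReal)) = ((r' + δ:ℝ):EReal) by norm_cast] at h2
      have hr : r ≤ r' + δ := by exact_mod_cast h2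
      rw [show ((r:EReal) - (a:EReal)) = ((r - a:ℝ):EReal) by norm_cast,
        show ((r':EReal) - (a':EReal)) = ((r' - a':ℝ):EReal) by norm_cast,
        show ((r' - a':ℝ):EReal) + ((2*δ:ℝ):EReal) = ((r' - a' + 2*δ:ℝ):EReal) by norm_cast]
      exact_mod_cast (by linarith : r - a ≤ r' - a' + 2*δ)

lemma EP.shiftEP {δ : ℝ} {I J : Bar} (h : EP δ I J) (c : ℝ) :
    EP δ (I.shift c) (J.shift c) := by
  constructor
  · have := h.1; show J.1 + c - δ ≤ I.1 + c; linarith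
  · show I.2 + (c:EReal) ≤ J.2 + (c:EReal) + (δ:EReal)
    calc I.2 + (c:EReal) ≤ (J.2 + (δ:EReal)) + (c:EReal) := by gcongr; exact h.2
      _ = J.2 + (c:EReal) + (δ:EReal) := ereal_add_comm3 _ _ _

lemma bar_shift_shift (I : Bar) (a b : ℝ) : (I.shift a).shift b = I.shift (a + b) := by
  obtain ⟨x, y⟩ := I
  simp only [Bar.shift, Prod.mk.injEq]
  exact ⟨by ring, ereal_add_add y a b⟩

end BSC


namespace BSC
open Bar Barcode

variable {B B' B'' : Barcode} {δ δ' : ℝ}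

lemma matching_EP (M : Matching δ B B') (i : ↥(M.delᶜ)) :
    EP δ (B.bar i) (B'.bar (M.φ i)) ∧ EP δ (B'.bar (M.φ i)) (B.bar i) :=
  ⟨EP_of_subset (B.valid i) (M.subset i), EP_of_subset (B'.valid _) (M.subset' i)⟩

/-- Deleted set of the composite matching, on the left. -/
def compDel (M : Matching δ B B') (M' : Matching δ' B' B'') : Set B.ι :=
  M.del ∪ {i | ∃ h : i ∉ M.del, (M.φ ⟨i, h⟩ : B'.ι) ∈ M'.del}

/-- Deleted set of the composite matching, on the right. -/
def compDel' (M : Matching δ B B') (M' : Matching δ' B' B'') : Set B''.ι :=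
  M'.del' ∪ {j | ∃ h : j ∉ M'.del', (M'.φ.symm ⟨j, h⟩ : B'.ι) ∈ M.del'}

noncomputable def compEquiv (M : Matching δ B B') (M' : Matching δ' B' B'') :
    ↥((compDel M M')ᶜ) ≃ ↥((compDel' M M')ᶜ) :=
  -- e1
  (Equiv.mk
    (fun i => (⟨⟨i.val, fun h => i.2 (Or.inl h)⟩,
        fun h => i.2 (Or.inr ⟨_, h⟩)⟩ :
        {x : ↥(M.delᶜ) // (M.φ x : B'.ι) ∉ M'.del}))
    (fun x => ⟨x.val.val, by
      rintro (h | ⟨h1, h2⟩)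
      · exact x.val.2 h
      · exact x.2 h2⟩)
    (fun i => Subtype.ext rfl) (fun x => Subtype.ext (Subtype.ext rfl))).trans <|
  -- e2
  ((M.φ.subtypeEquiv (p := fun x : ↥(M.delᶜ) => (M.φ x : B'.ι) ∉ M'.del)
      (q := fun y : ↥(M.del'ᶜ) => (y : B'.ι) ∉ M'.del) (fun x => Iff.rfl)).trans <|
  -- e3
  (Equiv.mk
    (fun y => (⟨⟨y.val.val, y.2⟩, y.val.2⟩ : {z : ↥(M'.delᶜ) // (z : B'.ι) ∉ M.del'}))
    (fun z => ⟨⟨z.val.val, z.2⟩, z.val.2⟩)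
    (fun y => Subtype.ext (Subtype.ext rfl)) (fun z => Subtype.ext (Subtype.ext rfl))).trans <|
  -- e4
  (M'.φ.subtypeEquiv (p := fun z : ↥(M'.delᶜ) => (z : B'.ι) ∉ M.del')
    (q := fun w : ↥(M'.del'ᶜ) => ((M'.φ.symm w : ↥(M'.delᶜ)) : B'.ι) ∉ M.del')
    (fun z => by simp)).trans
  -- e5
  (Equiv.mk
    (fun w => (⟨w.val.val, by
      rintro (h | ⟨h1, h2⟩)
      · exact w.val.2 h
      · apply w.2
        have : (⟨w.val.val, h1⟩ : ↥(M'.del'ᶜ)) = w.val := Subtype.ext rfl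
        rwa [this] at h2⟩ : ↥((compDel' M M')ᶜ)))
    (fun j => ⟨⟨j.val, fun h => j.2 (Or.inl h)⟩, fun h => j.2 (Or.inr ⟨_, h⟩)⟩)
    (fun w => Subtype.ext (Subtype.ext rfl)) (fun j => Subtype.ext rfl)))

lemma compEquiv_EP (M : Matching δ B B') (M' : Matching δ' B' B'')
    (i : ↥((compDel M M')ᶜ)) :
    EP (δ + δ') (B.bar i) (B''.bar (compEquiv M M' i)) ∧
    EP (δ' + δ) (B''.bar (compEquiv M M' i)) (B.bar i) := by
  set x : ↥(M.delᶜ) := ⟨i.val, fun h => i.2 (Or.inl h)⟩ with hx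
  have h2 : (M.φ x : B'.ι) ∉ M'.del := fun h => i.2 (Or.inr ⟨_, h⟩)
  set y : ↥(M'.delᶜ) := ⟨(M.φ x : B'.ι), h2⟩ with hy
  have key : ((compEquiv M M' i) : B''.ι) = (M'.φ y : B''.ι) := rfl
  have hbar : B.bar (i : B.ι) = B.bar (x : B.ι) := rfl
  have hmid : (B'.bar (M.φ x)) = B'.bar (y : B'.ι) := rfl
  constructor
  · rw [key, hbar]
    exact ((matching_EP M x).1.trans (hmid ▸ (matching_EP M' y).1))
  · rw [key, hbar]
    exact ((matching_EP M' y).2.trans (hmid ▸ (matching_EP M x).2))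

/-- Composition of matchings. -/
noncomputable def Matching.comp (M : Matching δ B B') (M' : Matching δ' B' B'')
    (hδ : 0 ≤ δ) (hδ' : 0 ≤ δ') : Matching (δ + δ') B B'' where
  del := compDel M M'
  del' := compDel' M M'
  del_short := by
    rintro i (hi | ⟨h1, h2⟩)
    · exact le_trans (M.del_short i hi) (by exact_mod_cast (by linarith : 2*δ ≤ 2*(δ+δ')))
    · have hlen := (matching_EP M ⟨i, h1⟩).1.length_le (matching_EP M ⟨i, h1⟩).2
      have hmid := M'.del_short _ h2
      calc (B.bar i).length ≤ (B'.bar (M.φ ⟨i, h1⟩)).length + ((2*δ:ℝ):EReal) := hlen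
        _ ≤ ((2*δ':ℝ):EReal) + ((2*δ:ℝ):EReal) := by gcongr
        _ = ((2*(δ+δ'):ℝ):EReal) := by norm_cast; ring
  del'_short := by
    rintro j (hj | ⟨h1, h2⟩)
    · exact le_trans (M'.del'_short j hj) (by exact_mod_cast (by linarith : 2*δ' ≤ 2*(δ+δ')))
    · set i' := M'.φ.symm ⟨j, h1⟩ with hi'
      have hj' : M'.φ i' = ⟨j, h1⟩ := M'.φ.apply_symm_apply _
      have hlen : (B''.bar j).length ≤ (B'.bar i').length + ((2*δ':ℝ):EReal) := by
        have := (matching_EP M' i').2.length_le (matching_EP M' i').1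
        rwa [hj'] at this
      have hmid := M.del'_short _ h2
      calc (B''.bar j).length ≤ (B'.bar i').length + ((2*δ':ℝ):EReal) := hlen
        _ ≤ ((2*δ:ℝ):EReal) + ((2*δ':ℝ):EReal) := by gcongr
        _ = ((2*(δ+δ'):ℝ):EReal) := by norm_cast; ring
  φ := compEquiv M M'
  subset := fun i => subset_of_EP (compEquiv_EP M M' i).1
  subset' := fun i => subset_of_EP (add_comm δ' δ ▸ (compEquiv_EP M M' i).2)

/-- Shifting both barcodes preserves matchings. -/
noncomputable def Matching.shiftBoth (M : Matching δ B B') (c : ℝ) :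
    Matching δ (B.shift c) (B'.shift c) where
  del := M.del
  del' := M.del'
  del_short := fun i hi => by
    have := M.del_short i hi
    rwa [show ((B.shift c).bar i).length = (B.bar i).length from Bar.length_shift c _]
  del'_short := fun j hj => by
    have := M.del'_short j hj
    rwa [show ((B'.shift c).bar j).length = (B'.bar j).length from Bar.length_shift c _]
  φ := M.φ
  subset := fun i => subset_of_EP ((matching_EP M i).1.shiftEP c)
  subset' := fun i => subset_of_EP ((matching_EP M i).2.shiftEP c)

lemma shift_shift_bar (C : Barcode) (a b : ℝ) (j : C.ι) :
    ((C.shift a).shift b).bar j = (C.shift (a+b)).bar j := bar_shift_shift _ _ _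

/-- Collapse a double shift on the right. -/
noncomputable def Matching.castRight {C : Barcode} {a b : ℝ}
    (M : Matching δ B ((C.shift a).shift b)) : Matching δ B (C.shift (a+b)) where
  del := M.del
  del' := M.del'
  del_short := M.del_short
  del'_short := fun j hj => by
    have := M.del'_short j hj
    erw [shift_shift_bar] at this; exact this
  φ := M.φ
  subset := fun i => by
    have := M.subset i
    erw [shift_shift_bar] at this; exact this
  subset' := fun i => by
    have := M.subset' i
    erw [shift_shift_bar] at this; exact this

/-- Collapse a double shift on the left. -/
noncomputable def Matching.castLeft {C : Barcode} {a b : ℝ}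
    (M : Matching δ ((C.shift a).shift b) B') : Matching δ (C.shift (a+b)) B' where
  del := M.del
  del' := M.del'
  del_short := fun i hi => by
    have := M.del_short i hi
    erw [shift_shift_bar] at this; exact this
  del'_short := M.del'_short
  φ := M.φ
  subset := fun i => by
    have := M.subset i
    erw [shift_shift_bar] at this; exact this
  subset' := fun i => by
    have := M.subset' i
    erw [shift_shift_bar] at this; exact this

lemma exists_matching_of_dHat_lt {e : ℝ} (he : 0 < e)
    (h : Barcode.dHat B B' < ENNReal.ofReal e) :
    ∃ c dd, 0 ≤ dd ∧ dd < e ∧ Nonempty (Matching dd B (B'.shift c)) := by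
  rw [Barcode.dHat, iInf_lt_iff] at h
  obtain ⟨c, hc⟩ := h
  rw [Barcode.dBottle, sInf_lt_iff] at hc
  obtain ⟨x, ⟨dd, ⟨hdd0, hM⟩, rfl⟩, hlt⟩ := hc
  exact ⟨c, dd, hdd0, by
    rwa [ENNReal.ofReal_lt_ofReal_iff he] at hlt, hM⟩

lemma dHat_le_of_matching {c dd : ℝ} (h0 : 0 ≤ dd) (M : Matching dd B (B'.shift c)) :
    Barcode.dHat B B' ≤ ENNReal.ofReal dd :=
  le_trans (iInf_le _ c) (sInf_le ⟨dd, ⟨h0, ⟨M⟩⟩, rfl⟩)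

end BSC


namespace BSC
open Bar Barcode

/-- A point: an index in one of the barcodes of the chain. -/
abbrev Pt (W : ℕ → Barcode) := Σ k, (W k).ι

def barAt {W : ℕ → Barcode} (p : Pt W) : Bar := (W p.1).bar p.2

section Flow
variable {W : ℕ → Barcode} {d : ℕ → ℝ} (M : ∀ k, Matching (d k) (W k) (W (k+1)))

/-- One step of the flow along the matchings. -/
noncomputable def step (p : Pt W) : Option (Pt W) :=
  @dite _ (p.2 ∈ (M p.1).del) (Classical.dec _) (fun _ => none)
    (fun h => some ⟨p.1 + 1, (((M p.1).φ ⟨p.2, h⟩ : ↥((M p.1).del'ᶜ)) : (W (p.1+1)).ι)⟩)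

/-- The `n`-step flow. -/
noncomputable def flow : ℕ → Pt W → Option (Pt W)
  | 0, p => some p
  | (n+1), p => (flow n p).bind (step M)

variable {M}

lemma step_eq_some {p q : Pt W} (h : step M p = some q) :
    ∃ hd : p.2 ∉ (M p.1).del,
      q = ⟨p.1 + 1, (((M p.1).φ ⟨p.2, hd⟩ : ↥((M p.1).del'ᶜ)) : (W (p.1+1)).ι)⟩ := by
  unfold step at h
  split at h
  · exact absurd h (by simp)
  · next hd => exact ⟨hd, (Option.some_injective _ h).symm⟩

lemma step_none {p : Pt W} (h : step M p = none) :
    (barAt p).length ≤ ((2 * d p.1 : ℝ) : EReal) := by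
  unfold step at h
  split at h
  · next hd => exact (M p.1).del_short _ hd
  · exact absurd h (by simp)

lemma step_stage {p q : Pt W} (h : step M p = some q) : q.1 = p.1 + 1 := by
  obtain ⟨hd, rfl⟩ := step_eq_some h; rfl

lemma step_EP {p q : Pt W} (h : step M p = some q) :
    EP (d p.1) (barAt p) (barAt q) ∧ EP (d p.1) (barAt q) (barAt p) := by
  obtain ⟨hd, rfl⟩ := step_eq_some h
  exact ⟨(matching_EP (M p.1) ⟨p.2, hd⟩).1, (matching_EP (M p.1) ⟨p.2, hd⟩).2⟩

lemma step_injective {p p' q : Pt W} (h : step M p = some q) (h' : step M p' = some q) :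
    p = p' := by
  obtain ⟨k, i⟩ := p
  obtain ⟨k', i'⟩ := p'
  obtain ⟨hd, hq⟩ := step_eq_some h
  obtain ⟨hd', hq'⟩ := step_eq_some h'
  have hk : k = k' := by
    have h1 : q.1 = k + 1 := step_stage h
    have h2 : q.1 = k' + 1 := step_stage h'
    omega
  subst hk
  rw [hq] at hq'
  have := (Sigma.mk.inj_iff.1 hq').2
  have hval : (((M k).φ ⟨i, hd⟩ : ↥((M k).del'ᶜ)) : (W (k+1)).ι)
      = (((M k).φ ⟨i', hd'⟩ : ↥((M k).del'ᶜ)) : (W (k+1)).ι) := eq_of_heq this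
  have h3 : (M k).φ ⟨i, hd⟩ = (M k).φ ⟨i', hd'⟩ := Subtype.ext hval
  have h4 := (M k).φ.injective h3
  simpa using congrArg Subtype.val h4

lemma flow_succ (n : ℕ) (p : Pt W) :
    flow M (n+1) p = (flow M n p).bind (step M) := rfl

lemma flow_add (m n : ℕ) (p : Pt W) :
    flow M (m + n) p = (flow M m p).bind (flow M n) := by
  induction n with
  | zero => simp [flow]
  | succ n ih =>
      have he : m + (n+1) = (m+n)+1 := by omega
      rw [he, flow_succ, ih]
      cases flow M m p with
      | none => rfl
      | some r => rfl

lemma flow_stage {n : ℕ} {p q : Pt W} (h : flow M n p = some q) : q.1 = p.1 + n := by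
  induction n generalizing q with
  | zero => simp [flow] at h; simp [← h]
  | succ n ih =>
      rw [flow_succ] at h
      obtain ⟨r, hr, hrq⟩ := Option.bind_eq_some_iff.1 h
      have h1 := ih hr
      have h2 := step_stage hrq
      omega

lemma flow_injective {n : ℕ} {p p' q : Pt W} (h : flow M n p = some q)
    (h' : flow M n p' = some q) : p = p' := by
  induction n generalizing q with
  | zero => simp [flow] at h h'; rw [h, h']
  | succ n ih =>
      rw [flow_succ] at h h'
      obtain ⟨r, hr, hrq⟩ := Option.bind_eq_some_iff.1 h
      obtain ⟨r', hr', hrq'⟩ := Option.bind_eq_some_iff.1 h'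
      have h5 := step_injective hrq hrq'
      subst h5
      exact ih hr hr'

variable (M) in
/-- A point with no predecessor. -/
def Born (p : Pt W) : Prop := ∀ q, step M q ≠ some p

lemma exists_born (p : Pt W) : ∃ b n, Born M b ∧ flow M n b = some p := by
  obtain ⟨k, i⟩ := p
  induction k using Nat.strong_induction_on with
  | _ k ih =>
    by_cases hb : Born M ⟨k, i⟩
    · exact ⟨⟨k, i⟩, 0, hb, rfl⟩
    · simp only [Born, not_forall, not_not] at hb
      obtain ⟨q, hq⟩ := hb
      have hst : (⟨k, i⟩ : Pt W).1 = q.1 + 1 := step_stage hq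
      obtain ⟨k', i'⟩ := q
      have hst' : k = k' + 1 := hst
      have hk' : k' < k := by omega
      obtain ⟨b, n, hb, hf⟩ := ih k' hk' i'
      refine ⟨b, n + 1, hb, ?_⟩
      rw [flow_succ, hf]
      simpa using hq

lemma born_unique {b b' q : Pt W} {n m : ℕ} (hb : Born M b) (hb' : Born M b')
    (h : flow M n b = some q) (h' : flow M m b' = some q) : b = b' := by
  wlog hnm : n ≤ m generalizing b b' n m
  · exact (this hb' hb h' h (by omega)).symm
  obtain ⟨s, rfl⟩ := Nat.exists_eq_add_of_le hnm
  rw [add_comm, flow_add] at h'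
  obtain ⟨r, hr, hrq⟩ := Option.bind_eq_some_iff.1 h'
  have hbr : b = r := flow_injective h hrq
  subst hbr
  cases s with
  | zero => simp [flow] at hr; rw [hr]
  | succ s =>
      rw [flow_succ] at hr
      obtain ⟨t, _, ht⟩ := Option.bind_eq_some_iff.1 hr
      exact absurd ht (hb t)

variable (M) in
/-- The flow from `p` is everywhere defined. -/
def Alive (p : Pt W) : Prop := ∀ n, (flow M n p).isSome

noncomputable def seqPt (p : Pt W) (h : Alive M p) (n : ℕ) : Pt W :=
  (flow M n p).get (h n)

lemma seqPt_spec (p : Pt W) (h : Alive M p) (n : ℕ) :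
    flow M n p = some (seqPt p h n) := (Option.some_get (h n)).symm

lemma seqPt_zero (p : Pt W) (h : Alive M p) : seqPt p h 0 = p := rfl

lemma seqPt_stage (p : Pt W) (h : Alive M p) (n : ℕ) : (seqPt p h n).1 = p.1 + n :=
  flow_stage (seqPt_spec p h n)

lemma seqPt_step (p : Pt W) (h : Alive M p) (n : ℕ) :
    step M (seqPt p h n) = some (seqPt p h (n+1)) := by
  have h1 := seqPt_spec p h n
  have h2 := seqPt_spec p h (n+1)
  rw [flow_succ, h1] at h2
  simpa using h2

lemma alive_of_flow {b q : Pt W} {m : ℕ} (h : flow M m b = some q) (hq : Alive M q) :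
    Alive M b := by
  intro n
  rcases le_or_gt n m with hnm | hnm
  · obtain ⟨s, rfl⟩ := Nat.exists_eq_add_of_le hnm
    rw [flow_add] at h
    obtain ⟨r, hr, -⟩ := Option.bind_eq_some_iff.1 h
    simp [hr]
  · obtain ⟨s, rfl⟩ := Nat.exists_eq_add_of_le hnm.le
    rw [flow_add, h]
    exact hq s

lemma alive_flow {b q : Pt W} {m : ℕ} (h : flow M m b = some q) (hb : Alive M b) :
    Alive M q := by
  intro n
  have h6 := hb (m + n)
  rw [flow_add, h] at h6
  simpa using h6

end Flow
end BSC


namespace BSC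
open Bar Barcode Filter

lemma EP_mono {δ δ' : ℝ} {I J : Bar} (h : EP δ I J) (hle : δ ≤ δ') : EP δ' I J := by
  refine ⟨by have := h.1; linarith, le_trans h.2 ?_⟩
  gcongr

lemma EP_refl (I : Bar) : EP 0 I I := by
  constructor
  · simp
  · simp only [EReal.coe_zero]
    rw [add_zero]

section Limit
variable {W : ℕ → Barcode} {d : ℕ → ℝ} {M : ∀ k, Matching (d k) (W k) (W (k+1))}

lemma barAt_valid (p : Pt W) : (barAt p).IsValid := (W p.1).valid p.2

lemma flow_EP_sum {n : ℕ} {p q : Pt W} (h : flow M n p = some q) :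
    EP (∑ j ∈ Finset.range n, d (p.1 + j)) (barAt p) (barAt q) ∧
    EP (∑ j ∈ Finset.range n, d (p.1 + j)) (barAt q) (barAt p) := by
  induction n generalizing q with
  | zero =>
      simp only [flow] at h
      cases h
      simp only [Finset.range_zero, Finset.sum_empty]
      exact ⟨EP_refl _, EP_refl _⟩
  | succ n ih =>
      rw [flow_succ] at h
      obtain ⟨r, hr, hrq⟩ := Option.bind_eq_some_iff.1 h
      obtain ⟨h1, h2⟩ := ih hr
      obtain ⟨h3, h4⟩ := step_EP hrq
      rw [flow_stage hr] at h3 h4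
      rw [Finset.sum_range_succ]
      exact ⟨h1.trans h3, (add_comm (d (p.1+n)) _) ▸ h4.trans h2⟩

lemma right_ne_bot (p : Pt W) : (barAt p).2 ≠ ⊥ := by
  intro hbot
  have hv := barAt_valid p
  rw [Bar.IsValid, hbot] at hv
  simp at hv

/-- real form of the right endpoint of a finite bar. -/
lemma right_eq_coe {p : Pt W} (h : (barAt p).2 ≠ ⊤) :
    (barAt p).2 = ((barAt p).2.toReal : EReal) := (EReal.coe_toReal h (right_ne_bot p)).symm

/-- Finiteness of the right endpoint is preserved along the flow. -/
lemma inf_invariant {p q : Pt W} {n : ℕ} (h : flow M n p = some q) :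
    ((barAt q).2 = ⊤ ↔ (barAt p).2 = ⊤) := by
  obtain ⟨h1, h2⟩ := flow_EP_sum h
  set S := ∑ j ∈ Finset.range n, d (p.1 + j) with hS
  constructor
  · intro ht
    by_contra hne
    have h22 := h2.2
    rw [ht, right_eq_coe hne,
      show (((barAt p).2.toReal : EReal) + ((S:ℝ):EReal)) = (((barAt p).2.toReal + S : ℝ) : EReal) by norm_cast] at h22
    exact absurd (top_le_iff.1 h22) (EReal.coe_ne_top _)
  · intro ht
    by_contra hne
    have h12 := h1.2
    rw [ht, right_eq_coe hne,
      show (((barAt q).2.toReal : EReal) + ((S:ℝ):EReal)) = (((barAt q).2.toReal + S : ℝ) : EReal) by norm_cast] at h12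
    exact absurd (top_le_iff.1 h12) (EReal.coe_ne_top _)

variable (hd : ∀ k, 0 ≤ d k ∧ d k ≤ (1/2)^k)
include hd

lemma sum_d_le (k n : ℕ) : (∑ j ∈ Finset.range n, d (k + j)) ≤ 2 * (1/2)^k := by
  have h1 : (∑ j ∈ Finset.range n, d (k + j)) ≤ ∑ j ∈ Finset.range n, (1/2:ℝ)^k * (1/2)^j := by
    apply Finset.sum_le_sum
    intro j _
    rw [← pow_add]
    exact (hd (k+j)).2
  rw [← Finset.mul_sum] at h1
  have h2 : (∑ j ∈ Finset.range n, (1/2:ℝ)^j) ≤ 2 := sum_geometric_two_le n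
  nlinarith [pow_pos (by norm_num : (0:ℝ) < 1/2) k]

lemma flow_EP {n : ℕ} {p q : Pt W} (h : flow M n p = some q) :
    EP (2 * (1/2)^p.1) (barAt p) (barAt q) ∧
    EP (2 * (1/2)^p.1) (barAt q) (barAt p) :=
  ⟨EP_mono (flow_EP_sum h).1 (sum_d_le hd p.1 n), EP_mono (flow_EP_sum h).2 (sum_d_le hd p.1 n)⟩

end Limit

section Limit2
variable {W : ℕ → Barcode} {d : ℕ → ℝ} (M : ∀ k, Matching (d k) (W k) (W (k+1)))

/-- Left endpoint along the flow (junk value 0 after death). -/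
noncomputable def lSeq (p : Pt W) (n : ℕ) : ℝ :=
  (flow M n p).elim 0 (fun q => (barAt q).1)

/-- Right endpoint along the flow, as a real (junk value after death / for infinite bars). -/
noncomputable def rSeq (p : Pt W) (n : ℕ) : ℝ :=
  (flow M n p).elim 0 (fun q => (barAt q).2.toReal)

noncomputable def limL (p : Pt W) : ℝ := limUnder atTop (lSeq M p)

noncomputable def limR (p : Pt W) : EReal :=
  if (barAt p).2 = ⊤ then ⊤ else ((limUnder atTop (rSeq M p) : ℝ) : EReal)

noncomputable def limBar (p : Pt W) : Bar := (limL M p, limR M p)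

variable {M}

lemma lSeq_seqPt {p : Pt W} (h : Alive M p) (n : ℕ) :
    lSeq M p n = (barAt (seqPt p h n)).1 := by
  rw [lSeq, seqPt_spec p h n]
  rfl

lemma rSeq_seqPt {p : Pt W} (h : Alive M p) (n : ℕ) :
    rSeq M p n = (barAt (seqPt p h n)).2.toReal := by
  rw [rSeq, seqPt_spec p h n]
  rfl

variable (hd : ∀ k, 0 ≤ d k ∧ d k ≤ (1/2)^k)
include hd

lemma lSeq_step_bound {p : Pt W} (h : Alive M p) (n : ℕ) :
    dist (lSeq M p n) (lSeq M p (n+1)) ≤ (1/2)^p.1 * (1/2)^n := by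
  rw [lSeq_seqPt h n, lSeq_seqPt h (n+1)]
  obtain ⟨h1, h2⟩ := step_EP (seqPt_step p h n)
  have e1 := h1.1
  have e2 := h2.1
  rw [Real.dist_eq, abs_le]
  have hst : (seqPt p h n).1 = p.1 + n := seqPt_stage p h n
  have hb : d ((seqPt p h n).1) ≤ (1/2)^p.1 * (1/2)^n := by
    rw [hst, ← pow_add]
    exact (hd (p.1+n)).2
  constructor <;> nlinarith

lemma lSeq_cauchy {p : Pt W} (h : Alive M p) : CauchySeq (lSeq M p) :=
  cauchySeq_of_le_geometric (1/2) ((1/2)^p.1) (by norm_num) (lSeq_step_bound hd h)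

lemma lSeq_tendsto {p : Pt W} (h : Alive M p) :
    Tendsto (lSeq M p) atTop (nhds (limL M p)) := by
  obtain ⟨l, hl⟩ := cauchySeq_tendsto_of_complete (lSeq_cauchy hd h)
  rwa [limL, hl.limUnder_eq]

lemma lSeq_dist_lim {p : Pt W} (h : Alive M p) (n : ℕ) :
    dist (lSeq M p n) (limL M p) ≤ 2 * ((1/2)^p.1 * (1/2)^n) := by
  have h5 := dist_le_of_le_geometric_of_tendsto (1/2) ((1/2)^p.1) (by norm_num)
    (lSeq_step_bound hd h) (lSeq_tendsto hd h) n
  calc dist (lSeq M p n) (limL M p) ≤ (1/2)^p.1 * (1/2)^n / (1 - 1/2) := h5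
    _ = 2 * ((1/2)^p.1 * (1/2)^n) := by ring

lemma rSeq_step_bound {p : Pt W} (h : Alive M p) (hI : (barAt p).2 ≠ ⊤) (n : ℕ) :
    dist (rSeq M p n) (rSeq M p (n+1)) ≤ (1/2)^p.1 * (1/2)^n := by
  rw [rSeq_seqPt h n, rSeq_seqPt h (n+1)]
  obtain ⟨h1, h2⟩ := step_EP (seqPt_step p h n)
  have hn : (barAt (seqPt p h n)).2 ≠ ⊤ := fun hh => hI ((inf_invariant (seqPt_spec p h n)).1 hh)
  have hn1 : (barAt (seqPt p h (n+1))).2 ≠ ⊤ := fun hh => hI ((inf_invariant (seqPt_spec p h (n+1))).1 hh)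
  have e1 := h1.2
  have e2 := h2.2
  rw [right_eq_coe hn, right_eq_coe hn1] at e1 e2
  set x := (barAt (seqPt p h n)).2.toReal
  set y := (barAt (seqPt p h (n+1))).2.toReal
  set dd := d ((seqPt p h n)).1
  have e1' : x ≤ y + dd := by
    rw [show ((y:EReal) + ((dd:ℝ):EReal)) = ((y + dd : ℝ) : EReal) by norm_cast] at e1
    exact_mod_cast e1
  have e2' : y ≤ x + dd := by
    rw [show ((x:EReal) + ((dd:ℝ):EReal)) = ((x + dd : ℝ) : EReal) by norm_cast] at e2
    exact_mod_cast e2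
  have hst : (seqPt p h n).1 = p.1 + n := seqPt_stage p h n
  have hb : dd ≤ (1/2)^p.1 * (1/2)^n := by
    rw [show dd = d ((seqPt p h n).1) from rfl, hst, ← pow_add]
    exact (hd (p.1+n)).2
  rw [Real.dist_eq, abs_le]
  constructor <;> nlinarith

lemma rSeq_tendsto {p : Pt W} (h : Alive M p) (hI : (barAt p).2 ≠ ⊤) :
    Tendsto (rSeq M p) atTop (nhds (limUnder atTop (rSeq M p))) := by
  obtain ⟨l, hl⟩ := cauchySeq_tendsto_of_complete
    (cauchySeq_of_le_geometric (1/2) ((1/2)^p.1) (by norm_num) (rSeq_step_bound hd h hI))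
  rwa [hl.limUnder_eq]

lemma rSeq_dist_lim {p : Pt W} (h : Alive M p) (hI : (barAt p).2 ≠ ⊤) (n : ℕ) :
    dist (rSeq M p n) (limUnder atTop (rSeq M p)) ≤ 2 * ((1/2)^p.1 * (1/2)^n) := by
  have h5 := dist_le_of_le_geometric_of_tendsto (1/2) ((1/2)^p.1) (by norm_num)
    (rSeq_step_bound hd h hI) (rSeq_tendsto hd h hI) n
  calc dist (rSeq M p n) _ ≤ (1/2)^p.1 * (1/2)^n / (1 - 1/2) := h5
    _ = 2 * ((1/2)^p.1 * (1/2)^n) := by ring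

/-- the key quantitative bound : the bar at `p` is `2 ⬝ 2^{-p.1}`-close to the limit bar. -/
lemma limBar_EP {p : Pt W} (h : Alive M p) :
    EP (2 * (1/2)^p.1) (barAt p) (limBar M p) ∧
    EP (2 * (1/2)^p.1) (limBar M p) (barAt p) := by
  have hL := lSeq_dist_lim hd h 0
  rw [pow_zero, mul_one, lSeq_seqPt h 0, seqPt_zero, Real.dist_eq, abs_le] at hL
  have hleft1 : (limBar M p).1 - 2 * (1/2)^p.1 ≤ (barAt p).1 := by
    have h9 := hL.2
    show limL M p - 2 * (1/2)^p.1 ≤ (barAt p).1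
    linarith
  have hleft2 : (barAt p).1 - 2 * (1/2)^p.1 ≤ (limBar M p).1 := by
    have h9 := hL.1
    show (barAt p).1 - 2 * (1/2)^p.1 ≤ limL M p
    linarith
  by_cases hI : (barAt p).2 = ⊤
  · have hR : (limBar M p).2 = ⊤ := by simp [limBar, limR, hI]
    constructor
    · exact ⟨hleft1, by rw [hR, EReal.top_add_coe]; exact le_top⟩
    · exact ⟨hleft2, by rw [hI, EReal.top_add_coe]; exact le_top⟩
  · have hR : (limBar M p).2 = ((limUnder atTop (rSeq M p) : ℝ) : EReal) := by
      simp [limBar, limR, hI]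
    have hRd := rSeq_dist_lim hd h hI 0
    rw [pow_zero, mul_one, rSeq_seqPt h 0, seqPt_zero, Real.dist_eq, abs_le] at hRd
    have hc := right_eq_coe (p := p) hI
    constructor
    · refine ⟨hleft1, ?_⟩
      rw [hc, hR, show (((limUnder atTop (rSeq M p) : ℝ) : EReal) + ((2 * (1/2)^p.1 : ℝ) : EReal))
        = ((limUnder atTop (rSeq M p) + 2 * (1/2)^p.1 : ℝ) : EReal) by norm_cast]
      exact EReal.coe_le_coe_iff.2 (by have h9 := hRd.1; linarith)
    · refine ⟨hleft2, ?_⟩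
      rw [hc, hR, show ((((barAt p).2.toReal : ℝ) : EReal) + ((2 * (1/2)^p.1 : ℝ) : EReal))
        = (((barAt p).2.toReal + 2 * (1/2)^p.1 : ℝ) : EReal) by norm_cast]
      exact EReal.coe_le_coe_iff.2 (by have h9 := hRd.2; linarith)

/-- the limit bar only depends on the flow-orbit. -/
lemma limBar_flow {p q : Pt W} {m : ℕ} (hf : flow M m p = some q) (h : Alive M p) :
    limBar M q = limBar M p := by
  have hflow : ∀ n, flow M n q = flow M (n + m) p := by
    intro n
    rw [add_comm, flow_add, hf]
    rfl
  have hLp := lSeq_tendsto hd h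
  have hLq : Tendsto (lSeq M q) atTop (nhds (limL M p)) := by
    have h2 : Tendsto (fun n => lSeq M p (n + m)) atTop (nhds (limL M p)) :=
      (tendsto_add_atTop_iff_nat m).2 hLp
    refine h2.congr fun n => ?_
    simp only [lSeq, hflow n]
  have hL : limL M q = limL M p := hLq.limUnder_eq
  by_cases hI : (barAt p).2 = ⊤
  · have hIq : (barAt q).2 = ⊤ := by
      rw [inf_invariant hf]
      exact hI
    simp [limBar, limR, hI, hIq, hL]
  · have hIq : (barAt q).2 ≠ ⊤ := fun hh => hI ((inf_invariant hf).1 hh)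
    have hRp := rSeq_tendsto hd h hI
    have hRq : Tendsto (rSeq M q) atTop (nhds (limUnder atTop (rSeq M p))) := by
      have h2 : Tendsto (fun n => rSeq M p (n + m)) atTop (nhds (limUnder atTop (rSeq M p))) :=
        (tendsto_add_atTop_iff_nat m).2 hRp
      refine h2.congr fun n => ?_
      simp only [rSeq, hflow n]
    have hR : limUnder atTop (rSeq M q) = limUnder atTop (rSeq M p) := hRq.limUnder_eq
    simp [limBar, limR, hI, hIq, hL, hR]

end Limit2
end BSC


namespace BSC
open Bar Barcode Filter

section Limit3
variable {W : ℕ → Barcode} {d : ℕ → ℝ} {M : ∀ k, Matching (d k) (W k) (W (k+1))}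

lemma barAt_mk (k : ℕ) (i : (W k).ι) : barAt (⟨k, i⟩ : Pt W) = (W k).bar i := rfl

lemma step_eq_of_not_del {p : Pt W} (h : p.2 ∉ (M p.1).del) :
    step M p = some ⟨p.1 + 1, (((M p.1).φ ⟨p.2, h⟩ : ↥((M p.1).del'ᶜ)) : (W (p.1+1)).ι)⟩ :=
  dif_neg h

/-- A bar that is born at a positive stage is short. -/
lemma born_short (m : ℕ) (i : (W (m+1)).ι) (hB : Born M (⟨m+1, i⟩ : Pt W)) :
    (barAt (⟨m+1, i⟩ : Pt W)).length ≤ ((2 * d m : ℝ) : EReal) := by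
  by_cases hdel : i ∈ (M m).del'
  · exact (M m).del'_short i hdel
  · exfalso
    set x : ↥((M m).delᶜ) := (M m).φ.symm ⟨i, hdel⟩ with hx
    have hstep := step_eq_of_not_del (p := (⟨m, (x : (W m).ι)⟩ : Pt W)) x.2
    have hφ : (M m).φ ⟨(x : (W m).ι), x.2⟩ = ⟨i, hdel⟩ := by
      rw [show (⟨(x : (W m).ι), x.2⟩ : ↥((M m).delᶜ)) = x from Subtype.ext rfl, hx]
      exact (M m).φ.apply_symm_apply _
    rw [hφ] at hstep
    exact hB _ hstep

/-- Length comparison between a bar and its limit bar. -/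
lemma length_le_limBar {p : Pt W} (hd : ∀ k, 0 ≤ d k ∧ d k ≤ (1/2)^k) (h : Alive M p) :
    (barAt p).length ≤ (limBar M p).length + ((2*(2*(1/2)^p.1) : ℝ) : EReal) :=
  (limBar_EP hd h).1.length_le (limBar_EP hd h).2

lemma limBar_length_le {p : Pt W} (hd : ∀ k, 0 ≤ d k ∧ d k ≤ (1/2)^k) (h : Alive M p) :
    (limBar M p).length ≤ (barAt p).length + ((2*(2*(1/2)^p.1) : ℝ) : EReal) :=
  (limBar_EP hd h).2.length_le (limBar_EP hd h).1

variable (M) in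
/-- Index set of the limit barcode. -/
def limitIdx : Type :=
  {p : Pt W // Born M p ∧ Alive M p ∧ ((limL M p : EReal) < limR M p)}

/-- If a bar dies, it is short. -/
lemma length_le_of_not_alive {p : Pt W} (hd : ∀ k, 0 ≤ d k ∧ d k ≤ (1/2)^k)
    (h : ¬ Alive M p) :
    (barAt p).length ≤ ((2*(1/2)^p.1 + 2*(2*(1/2)^p.1) : ℝ) : EReal) := by
  classical
  simp only [Alive, not_forall, Option.not_isSome_iff_eq_none] at h
  have hnone : flow M (Nat.find h) p = none := Nat.find_spec h
  have hpos : Nat.find h ≠ 0 := by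
    intro h0
    rw [h0] at hnone
    simp [flow] at hnone
  obtain ⟨n', hn'⟩ : ∃ n', Nat.find h = n' + 1 := ⟨Nat.find h - 1, by omega⟩
  rw [hn'] at hnone
  have hsome : flow M n' p ≠ none := Nat.find_min h (by omega)
  obtain ⟨q, hq⟩ := Option.ne_none_iff_exists'.1 hsome
  rw [flow_succ, hq] at hnone
  have hstep : step M q = none := by simpa using hnone
  have hqlen := step_none hstep
  have hEP := flow_EP hd hq
  have hlen := hEP.1.length_le hEP.2
  have hq1 : q.1 = p.1 + n' := flow_stage hq
  have hdq : 2 * d q.1 ≤ 2 * (1/2)^p.1 := by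
    have h1 := (hd q.1).2
    have h2 : ((1:ℝ)/2)^q.1 ≤ (1/2)^p.1 := by
      apply pow_le_pow_of_le_one (by norm_num) (by norm_num)
      omega
    linarith
  calc (barAt p).length ≤ (barAt q).length + ((2*(2*(1/2)^p.1) : ℝ) : EReal) := hlen
    _ ≤ ((2 * d q.1 : ℝ) : EReal) + ((2*(2*(1/2)^p.1) : ℝ) : EReal) := by gcongr
    _ = ((2 * d q.1 + 2*(2*(1/2)^p.1) : ℝ) : EReal) := by norm_cast
    _ ≤ ((2*(1/2)^p.1 + 2*(2*(1/2)^p.1) : ℝ) : EReal) := by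
        exact EReal.coe_le_coe_iff.2 (by linarith)

/-- If the limit bar is degenerate, the bar is short. -/
lemma length_le_of_lim_degenerate {p : Pt W} (hd : ∀ k, 0 ≤ d k ∧ d k ≤ (1/2)^k)
    (h : Alive M p) (hdeg : ¬ ((limL M p : EReal) < limR M p)) :
    (barAt p).length ≤ ((2*(2*(1/2)^p.1) : ℝ) : EReal) := by
  push_neg at hdeg
  have hlim : (limBar M p).length ≤ 0 := by
    rw [Bar.length]
    calc (limBar M p).2 - ((limBar M p).1 : EReal)
        ≤ ((limBar M p).1 : EReal) - ((limBar M p).1 : EReal) := by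
          apply EReal.sub_le_sub _ (le_refl _)
          exact hdeg
      _ = 0 := by
          rw [show (((limBar M p).1 : EReal) - ((limBar M p).1:ℝ))
            = (((limBar M p).1 - (limBar M p).1 : ℝ) : EReal) by norm_cast]
          norm_num
  calc (barAt p).length ≤ (limBar M p).length + ((2*(2*(1/2)^p.1) : ℝ) : EReal) :=
        length_le_limBar hd h
    _ ≤ 0 + ((2*(2*(1/2)^p.1) : ℝ) : EReal) := by gcongr
    _ = ((2*(2*(1/2)^p.1) : ℝ) : EReal) := by rw [zero_add]

/-- Bound for the limit length of a late-born bar. -/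
lemma limBar_length_of_born_late (m : ℕ) (i : (W (m+1)).ι)
    (hd : ∀ k, 0 ≤ d k ∧ d k ≤ (1/2)^k)
    (hB : Born M (⟨m+1, i⟩ : Pt W)) (h : Alive M (⟨m+1, i⟩ : Pt W)) :
    (limBar M (⟨m+1, i⟩ : Pt W)).length ≤ ((4 * (1/2)^m : ℝ) : EReal) := by
  have h1 := limBar_length_le hd h
  have h2 := born_short m i hB
  calc (limBar M (⟨m+1, i⟩ : Pt W)).length
      ≤ (barAt (⟨m+1, i⟩ : Pt W)).length + ((2*(2*(1/2)^(m+1)) : ℝ) : EReal) := h1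
    _ ≤ ((2 * d m : ℝ) : EReal) + ((2*(2*(1/2)^(m+1)) : ℝ) : EReal) := by gcongr
    _ = ((2 * d m + 2*(2*(1/2)^(m+1)) : ℝ) : EReal) := by norm_cast
    _ ≤ ((4 * (1/2)^m : ℝ) : EReal) := by
        apply EReal.coe_le_coe_iff.2
        have := (hd m).2
        have hp : ((1:ℝ)/2)^(m+1) = (1/2)^m / 2 := by rw [pow_succ]; ring
        linarith

variable (M) in
/-- The limit barcode of a chain of matchings. -/
noncomputable def limitBarcode (hd : ∀ k, 0 ≤ d k ∧ d k ≤ (1/2)^k) : Barcode where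
  ι := limitIdx M
  bar p := limBar M p.val
  valid p := p.2.2.2
  finLong := by
    intro ε hε
    -- pick K with 8 * (1/2)^K ≤ ε
    obtain ⟨K, hK⟩ : ∃ K : ℕ, 8 * ((1:ℝ)/2)^K ≤ ε := by
      obtain ⟨K, hK⟩ := exists_pow_lt_of_lt_one (by positivity : (0:ℝ) < ε/8) (by norm_num : (1:ℝ)/2 < 1)
      exact ⟨K, by linarith⟩
    set S := {p : limitIdx M | (ε : EReal) ≤ (limBar M p.val).length} with hS
    -- every index in S has stage at most K
    have hstage : ∀ p : limitIdx M, p ∈ S → p.val.1 ≤ K := by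
      rintro ⟨⟨pk, pi⟩, hB, hA, hV⟩ hpS
      by_contra hgt
      push_neg at hgt
      cases pk with
      | zero =>
          have hgt' : K < 0 := hgt
          omega
      | succ m =>
          have hgt' : K < m + 1 := hgt
          have hlate := limBar_length_of_born_late m pi hd hB hA
          have hle : (ε : EReal) ≤ ((4 * (1/2)^m : ℝ) : EReal) := le_trans hpS hlate
          have : ε ≤ 4 * ((1:ℝ)/2)^m := EReal.coe_le_coe_iff.1 hle
          have hm : K ≤ m := by omega

          have : ((1:ℝ)/2)^m ≤ (1/2)^K := pow_le_pow_of_le_one (by norm_num) (by norm_num) hm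
          nlinarith [pow_pos (by norm_num : (0:ℝ) < 1/2) m]
    -- map into stage-K points
    set f : limitIdx M → Pt W := fun p => (flow M (K - p.val.1) p.val).getD p.val with hf
    have hfspec : ∀ p : limitIdx M, flow M (K - p.val.1) p.val = some (f p) := by
      intro p
      have hs := p.2.2.1 (K - p.val.1)
      obtain ⟨q, hq⟩ := Option.isSome_iff_exists.1 hs
      have hfp : f p = q := by
        rw [hf]
        simp [hq]
      rw [hfp]
      exact hq
    have himg : f '' S ⊆ {q : Pt W | q.1 = K ∧ ((ε/2 : ℝ) : EReal) ≤ (barAt q).length} := by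
      rintro _ ⟨p, hpS, rfl⟩
      have hstg : (f p).1 = K := by
        have := flow_stage (hfspec p)
        have := hstage p hpS
        omega
      refine ⟨hstg, ?_⟩
      -- length at stage K is at least ε/2
      have hA : Alive M p.val := p.2.2.1
      have hAq : Alive M (f p) := alive_flow (hfspec p) hA
      have hlim : limBar M (f p) = limBar M p.val := limBar_flow hd (hfspec p) hA
      have h1 : (limBar M (f p)).length ≤ (barAt (f p)).length + ((2*(2*(1/2)^(f p).1) : ℝ) : EReal) :=
        limBar_length_le hd hAq
      rw [hlim, hstg] at h1
      have h2 : (ε : EReal) ≤ (barAt (f p)).length + ((2*(2*(1/2)^K) : ℝ) : EReal) :=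
        le_trans hpS h1
      -- conclude
      by_cases hI : (barAt (f p)).2 = ⊤
      · rw [Bar.length, hI, EReal.top_sub_coe]
        exact le_top
      · rw [Bar.length, right_eq_coe hI,
          show (((barAt (f p)).2.toReal : EReal) - ((barAt (f p)).1 : ℝ))
            = (((barAt (f p)).2.toReal - (barAt (f p)).1 : ℝ) : EReal) by norm_cast]
        apply EReal.coe_le_coe_iff.2
        rw [Bar.length, right_eq_coe hI,
          show (((barAt (f p)).2.toReal : EReal) - ((barAt (f p)).1 : ℝ))
            = (((barAt (f p)).2.toReal - (barAt (f p)).1 : ℝ) : EReal) by norm_cast,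
          show ((((barAt (f p)).2.toReal - (barAt (f p)).1 : ℝ) : EReal) + ((2*(2*(1/2)^K) : ℝ) : EReal))
            = ((((barAt (f p)).2.toReal - (barAt (f p)).1) + 2*(2*(1/2)^K) : ℝ) : EReal) by norm_cast] at h2
        have h3 : ε ≤ ((barAt (f p)).2.toReal - (barAt (f p)).1) + 2*(2*(1/2)^K) :=
          EReal.coe_le_coe_iff.1 h2
        linarith
    have hTfin : ({q : Pt W | q.1 = K ∧ ((ε/2 : ℝ) : EReal) ≤ (barAt q).length}).Finite := by
      have hF := (W K).finLong (ε/2) (by positivity)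
      have : {q : Pt W | q.1 = K ∧ ((ε/2 : ℝ) : EReal) ≤ (barAt q).length}
          ⊆ Sigma.mk K '' {i : (W K).ι | ((ε/2 : ℝ) : EReal) ≤ ((W K).bar i).length} := by
        rintro ⟨qk, qi⟩ ⟨hq1, hq2⟩
        have : qk = K := hq1
        subst this
        exact ⟨qi, hq2, rfl⟩
      exact Set.Finite.subset (Set.Finite.image _ hF) this
    apply Set.Finite.of_finite_image (f := f)
    · exact Set.Finite.subset hTfin himg
    · intro p hp p' hp' heq
      have h1 := hfspec p
      have h2 := hfspec p'
      rw [heq] at h1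
      have := born_unique p.2.1 p'.2.1 h1 h2
      exact Subtype.ext this

end Limit3
end BSC


namespace BSC
open Bar Barcode Filter

section Limit4
variable {W : ℕ → Barcode} {d : ℕ → ℝ} {M : ∀ k, Matching (d k) (W k) (W (k+1))}

variable (M) in
noncomputable def birth (p : Pt W) : Pt W := (exists_born (M := M) p).choose

lemma birth_born (p : Pt W) : Born M (birth M p) :=
  (exists_born (M := M) p).choose_spec.choose_spec.1

lemma birth_flow (p : Pt W) : ∃ n, flow M n (birth M p) = some p :=
  ⟨(exists_born (M := M) p).choose_spec.choose,
    (exists_born (M := M) p).choose_spec.choose_spec.2⟩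

lemma birth_props (hd : ∀ k, 0 ≤ d k ∧ d k ≤ (1/2)^k) (p : Pt W) (hA : Alive M p) :
    Alive M (birth M p) ∧ limBar M (birth M p) = limBar M p ∧ (birth M p).1 ≤ p.1 := by
  obtain ⟨n, hn⟩ := birth_flow (M := M) p
  have hAb : Alive M (birth M p) := alive_of_flow hn hA
  have hst : p.1 = (birth M p).1 + n := flow_stage hn
  exact ⟨hAb, (limBar_flow hd hn hAb).symm, by omega⟩

variable (M) in
/-- deleted bars of `W k` in the limit matching : dead or degenerate ones. -/
def badIdx (k : ℕ) : Set (W k).ι :=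
  {i | ¬(Alive M (⟨k, i⟩ : Pt W) ∧ ((limL M (⟨k, i⟩ : Pt W) : EReal) < limR M (⟨k, i⟩ : Pt W)))}

variable (M) in
/-- deleted bars of the limit barcode in the limit matching : late-born ones. -/
def lateIdx (k : ℕ) : Set (limitIdx M) := {p | ¬(p.val.1 ≤ k)}

variable (hd : ∀ k, 0 ≤ d k ∧ d k ≤ (1/2)^k)

noncomputable def limitG (k : ℕ) (i : ↥((badIdx M k)ᶜ)) : ↥((lateIdx M k)ᶜ) :=
  ⟨⟨birth M ⟨k, i.val⟩,
    birth_born _,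
    (birth_props hd ⟨k, i.val⟩ (not_not.1 i.2).1).1,
    by
      have hV : ((limBar M (⟨k, i.val⟩ : Pt W)).1 : EReal) < (limBar M (⟨k, i.val⟩ : Pt W)).2 :=
        (not_not.1 i.2).2
      rw [← (birth_props hd ⟨k, i.val⟩ (not_not.1 i.2).1).2.1] at hV
      exact hV⟩,
    not_not.2 (birth_props hd ⟨k, i.val⟩ (not_not.1 i.2).1).2.2⟩

lemma limitG_bijective (k : ℕ) : Function.Bijective (limitG (M := M) hd k) := by
  constructor
  · intro i i' heq
    have hb : birth M ⟨k, i.val⟩ = birth M ⟨k, i'.val⟩ :=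
      congrArg Subtype.val (congrArg Subtype.val heq)
    obtain ⟨n, hn⟩ := birth_flow (M := M) (⟨k, i.val⟩ : Pt W)
    obtain ⟨n', hn'⟩ := birth_flow (M := M) (⟨k, i'.val⟩ : Pt W)
    rw [hb] at hn
    have hst : (⟨k, (i : (W k).ι)⟩ : Pt W).1 = (birth M ⟨k, i'.val⟩).1 + n := flow_stage hn
    have hst' : (⟨k, (i' : (W k).ι)⟩ : Pt W).1 = (birth M ⟨k, i'.val⟩).1 + n' := flow_stage hn'
    have hnn' : n = n' := by
      have e1 : k = (birth M ⟨k, i'.val⟩).1 + n := hst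
      have e2 : k = (birth M ⟨k, i'.val⟩).1 + n' := hst'
      omega
    rw [hnn', hn'] at hn
    have := (Sigma.mk.inj_iff.1 (Option.some_injective _ hn)).2
    exact Subtype.ext (eq_of_heq this).symm
  · rintro ⟨⟨p, hB, hA, hV⟩, hlate⟩
    have hpk : p.1 ≤ k := not_not.1 hlate
    obtain ⟨q, hq⟩ := Option.isSome_iff_exists.1 (hA (k - p.1))
    have hq1 : q.1 = k := by
      have := flow_stage hq
      omega
    obtain ⟨qk, qi⟩ := q
    subst hq1
    have hAq : Alive M (⟨qk, qi⟩ : Pt W) := alive_flow hq hA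
    have hlim : limBar M (⟨qk, qi⟩ : Pt W) = limBar M p := limBar_flow hd hq hA
    have hVq : ((limL M (⟨qk, qi⟩ : Pt W) : EReal) < limR M (⟨qk, qi⟩ : Pt W)) := by
      have hV' : ((limBar M p).1 : EReal) < (limBar M p).2 := hV
      rw [← hlim] at hV'
      exact hV'
    refine ⟨⟨qi, not_not.2 ⟨hAq, hVq⟩⟩, ?_⟩
    have hbq : birth M (⟨qk, qi⟩ : Pt W) = p := by
      obtain ⟨n, hn⟩ := birth_flow (M := M) (⟨qk, qi⟩ : Pt W)
      exact born_unique (birth_born _) hB hn hq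
    apply Subtype.ext
    apply Subtype.ext
    exact hbq

noncomputable def limitMatching (k : ℕ) :
    Matching (4 * (1/2)^k) (W k) (limitBarcode M hd) where
  del := badIdx M k
  del' := lateIdx M k
  del_short := by
    intro i hi
    by_cases hA : Alive M (⟨k, i⟩ : Pt W)
    · have hdeg : ¬ ((limL M (⟨k, i⟩ : Pt W) : EReal) < limR M (⟨k, i⟩ : Pt W)) := by
        intro hV
        exact hi ⟨hA, hV⟩
      have := length_le_of_lim_degenerate hd hA hdeg
      refine le_trans this (EReal.coe_le_coe_iff.2 ?_)
      have : (0:ℝ) < (1/2)^k := by positivity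
      nlinarith
    · have := length_le_of_not_alive hd hA
      refine le_trans this (EReal.coe_le_coe_iff.2 ?_)
      have : (0:ℝ) < (1/2)^k := by positivity
      nlinarith
  del'_short := by
    rintro ⟨⟨pk, pi⟩, hB, hA, hV⟩ hlate
    have hlate' : ¬ (pk ≤ k) := hlate
    cases pk with
    | zero => omega
    | succ m =>
        have hm : k ≤ m := by omega
        have := limBar_length_of_born_late m pi hd hB hA
        refine le_trans this (EReal.coe_le_coe_iff.2 ?_)
        have h1 : ((1:ℝ)/2)^m ≤ (1/2)^k := pow_le_pow_of_le_one (by norm_num) (by norm_num) hm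
        nlinarith [pow_pos (by norm_num : (0:ℝ) < 1/2) m, pow_pos (by norm_num : (0:ℝ) < 1/2) k]
  φ := Equiv.ofBijective (limitG (M := M) hd k) (limitG_bijective (M := M) hd k)
  subset := by
    intro i
    apply subset_of_EP
    have hA : Alive M (⟨k, i.val⟩ : Pt W) := (not_not.1 i.2).1
    have hEP := (limBar_EP hd hA).1
    have hlim : limBar M (birth M ⟨k, i.val⟩) = limBar M (⟨k, i.val⟩ : Pt W) :=
      (birth_props hd ⟨k, i.val⟩ hA).2.1
    have hbar : (limitBarcode M hd).bar (((Equiv.ofBijective (limitG (M := M) hd k) (limitG_bijective (M := M) hd k)) i).val)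
        = limBar M (birth M ⟨k, i.val⟩) := rfl
    erw [hbar, hlim]
    refine EP_mono hEP ?_
    have : (0:ℝ) < (1/2)^k := by positivity
    nlinarith
  subset' := by
    intro i
    apply subset_of_EP
    have hA : Alive M (⟨k, i.val⟩ : Pt W) := (not_not.1 i.2).1
    have hEP := (limBar_EP hd hA).2
    have hlim : limBar M (birth M ⟨k, i.val⟩) = limBar M (⟨k, i.val⟩ : Pt W) :=
      (birth_props hd ⟨k, i.val⟩ hA).2.1
    have hbar : (limitBarcode M hd).bar (((Equiv.ofBijective (limitG (M := M) hd k) (limitG_bijective (M := M) hd k)) i).val)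
        = limBar M (birth M ⟨k, i.val⟩) := rfl
    erw [hbar, hlim]
    refine EP_mono hEP ?_
    have : (0:ℝ) < (1/2)^k := by positivity
    nlinarith

end Limit4
end BSC


/-- The space `𝓑̂` of barcodes modulo overall shift, with the
distance induced by the bottleneck distance, is complete: every Cauchy sequence
converges. -/
theorem barcode_space_complete (u : ℕ → Barcode)
    (hu : ∀ ε : ℝ≥0∞, 0 < ε → ∃ N : ℕ, ∀ m ≥ N, ∀ n ≥ N,
      Barcode.dHat (u m) (u n) < ε) :
    ∃ B : Barcode, ∀ ε : ℝ≥0∞, 0 < ε → ∃ N : ℕ, ∀ n ≥ N,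
      Barcode.dHat (u n) B < ε := by
  classical
  -- thresholds
  have hu' := fun k : ℕ => hu (ENNReal.ofReal ((1/2)^k))
    (ENNReal.ofReal_pos.2 (by positivity))
  choose N0 hN0 using hu'
  set N : ℕ → ℕ := fun k => ∑ j ∈ Finset.range (k+1), N0 j with hNdef
  have hge : ∀ k, N0 k ≤ N k := by
    intro k
    rw [hNdef]
    exact Finset.single_le_sum (f := N0) (fun j _ => Nat.zero_le _)
      (Finset.self_mem_range_succ k)
  have hmono : ∀ k, N k ≤ N (k+1) := by
    intro k
    rw [hNdef]
    exact Finset.sum_le_sum_of_subset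
      (Finset.range_subset_range.2 (by omega))
  -- consecutive matchings
  have hstep : ∀ k, Barcode.dHat (u (N k)) (u (N (k+1))) < ENNReal.ofReal ((1/2)^k) :=
    fun k => hN0 k (N k) (hge k) (N (k+1)) (le_trans (hge k) (hmono k))
  have hex : ∀ k, ∃ c dd, 0 ≤ dd ∧ dd < (1/2)^k ∧
      Nonempty (Barcode.Matching dd (u (N k)) ((u (N (k+1))).shift c)) :=
    fun k => BSC.exists_matching_of_dHat_lt (by positivity) (hstep k)
  choose c dd hdd0 hddlt hM using hex
  have hdp : ∀ k, 0 ≤ dd k ∧ dd k ≤ (1/2)^k := fun k => ⟨hdd0 k, (hddlt k).le⟩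
  -- cumulative shifts
  set S : ℕ → ℝ := fun k => Nat.rec (0:ℝ) (fun k acc => c k + acc) k with hSdef
  have hSsucc : ∀ k, S (k+1) = c k + S k := by
    intro k
    rw [hSdef]
  -- aligned chain of matchings
  have MW : ∀ k, Barcode.Matching (dd k)
      ((u (N k)).shift (S k)) ((u (N (k+1))).shift (S (k+1))) := by
    intro k
    rw [hSsucc k]
    exact BSC.Matching.castRight (BSC.Matching.shiftBoth (hM k).some (S k))
  -- limit barcode
  refine ⟨BSC.limitBarcode (W := fun k => (u (N k)).shift (S k)) MW hdp, ?_⟩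
  intro ε hε
  obtain ⟨k, hk⟩ : ∃ k, ENNReal.ofReal ((1/2)^k + 4*(1/2)^k) < ε := by
    rcases eq_or_ne ε ⊤ with rfl | hne
    · exact ⟨0, ENNReal.ofReal_lt_top⟩
    · have hpos : 0 < ε.toReal := ENNReal.toReal_pos hε.ne' hne
      obtain ⟨j, hj⟩ := exists_pow_lt_of_lt_one
        (show (0:ℝ) < ε.toReal/5 by linarith) (by norm_num : (1:ℝ)/2 < 1)
      refine ⟨j, ?_⟩
      rw [ENNReal.ofReal_lt_iff_lt_toReal (by positivity) hne]
      linarith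
  refine ⟨N k, fun n hn => ?_⟩
  have hdh : Barcode.dHat (u n) (u (N k)) < ENNReal.ofReal ((1/2)^k) :=
    hN0 k n (le_trans (hge k) hn) (N k) (hge k)
  obtain ⟨c', δ', hδ'0, hδ'lt, ⟨M1⟩⟩ := BSC.exists_matching_of_dHat_lt (by positivity) hdh
  have M4 : Barcode.Matching (4*(1/2)^k) ((u (N k)).shift c')
      ((BSC.limitBarcode (W := fun k => (u (N k)).shift (S k)) MW hdp).shift (c' - S k)) := by
    have hML := BSC.Matching.castLeft (BSC.Matching.shiftBoth (BSC.limitMatching (M := MW) hdp k) (c' - S k))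
    rwa [show S k + (c' - S k) = c' by ring] at hML
  have Mfin := BSC.Matching.comp M1 M4 hδ'0 (by positivity)
  calc Barcode.dHat (u n) (BSC.limitBarcode (W := fun k => (u (N k)).shift (S k)) MW hdp)
      ≤ ENNReal.ofReal (δ' + 4*(1/2)^k) := BSC.dHat_le_of_matching (by positivity) Mfin
    _ ≤ ENNReal.ofReal ((1/2)^k + 4*(1/2)^k) := ENNReal.ofReal_le_ofReal (by linarith)
    _ < ε := hk
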